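/- Row-norm bound for Bernoulli–Gaussian matrices: let A ∈ ℝ^{r×s} have i.i.d. entries A_{ij} = B_{ij}·ξ_{ij} where B_{ij} ~ Ber(θ) and ξ_{ij} ~ N(0,1) are mutually independent. Then P(|AAᵀ|_∞ > 5sθ) ≤ r·e^{−sθ/6}, where |AAᵀ|_∞ = maxᵢ ‖ρᵢ‖₂² and ρᵢ is the i-th row of A. -/

import Mathlib

open MeasureTheory ProbabilityTheory Real
open scoped ENNReal NNReal

/-- Row-norm bound for Bernoulli–Gaussian matrices: if `A_{ij} = B_{ij} ξ_{ij}` with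
mutually independent `B_{ij} ~ Ber(θ)` and `ξ_{ij} ~ N(0,1)`, then
`P(|AAᵀ|_∞ > 5 s θ) ≤ r e^{−sθ/6}`, where `|AAᵀ|_∞ = maxᵢ ‖ρᵢ‖₂²`. -/

lemma gauss_mgf : ∫⁻ x, ENNReal.ofReal (Real.exp (x^2/3)) ∂(gaussianReal 0 1) =
    ENNReal.ofReal (Real.sqrt 3) := by
  rw [gaussianReal_of_var_ne_zero 0 one_ne_zero,
    lintegral_withDensity_eq_lintegral_mul _
      (measurable_gaussianPDF 0 1) (by fun_prop)]
  have hEq : ∀ x : ℝ, (gaussianPDF 0 1 x * ENNReal.ofReal (Real.exp (x^2/3))) =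
      ENNReal.ofReal ((Real.sqrt (2*π))⁻¹ * Real.exp (-(1/6) * x^2)) := by
    intro x
    rw [gaussianPDF, ← ENNReal.ofReal_mul (gaussianPDFReal_nonneg 0 1 x)]
    congr 1
    rw [gaussianPDFReal]
    push_cast
    rw [mul_one, mul_assoc, ← Real.exp_add]
    ring_nf
  simp only [Pi.mul_apply, hEq]
  rw [← ofReal_integral_eq_lintegral_ofReal
    ((integrable_exp_neg_mul_sq (by norm_num : (0:ℝ) < 1/6)).const_mul _)
    (Filter.Eventually.of_forall fun x => by positivity)]
  rw [integral_const_mul, integral_gaussian]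
  congr 1
  have h2π : (0:ℝ) < Real.sqrt (2*π) := Real.sqrt_pos.2 (by positivity)
  rw [show π / (1/6) = 3 * (2*π) by ring, Real.sqrt_mul (by norm_num)]
  field_simp
  rw [Real.sqrt_mul (by positivity), Real.sqrt_mul (by norm_num)]
  ring

lemma entry_mgf (θ : ℝ) (hθ0 : 0 ≤ θ) (hθ1 : θ ≤ 1) :
    ∫⁻ p : ℝ × ℝ, ENNReal.ofReal (Real.exp ((p.1 * p.2)^2/3))
      ∂((ENNReal.ofReal θ • Measure.dirac (1:ℝ) +
          ENNReal.ofReal (1 - θ) • Measure.dirac 0).prod (gaussianReal 0 1)) =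
    ENNReal.ofReal (1 - θ + Real.sqrt 3 * θ) := by
  have hmeas : Measurable fun p : ℝ × ℝ => ENNReal.ofReal (Real.exp ((p.1 * p.2)^2/3)) := by
    fun_prop
  rw [lintegral_prod _ hmeas.aemeasurable]
  have hg : Measurable fun b : ℝ =>
      ∫⁻ x, ENNReal.ofReal (Real.exp ((b * x)^2/3)) ∂(gaussianReal 0 1) :=
    Measurable.lintegral_prod_right (f := fun b x : ℝ => ENNReal.ofReal (Real.exp ((b * x)^2/3)))
      (by fun_prop)
  rw [lintegral_add_measure, lintegral_smul_measure, lintegral_smul_measure,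
    lintegral_dirac' _ hg, lintegral_dirac' _ hg]
  have h1 : ∫⁻ x, ENNReal.ofReal (Real.exp (((1:ℝ) * x)^2/3)) ∂(gaussianReal 0 1) =
      ENNReal.ofReal (Real.sqrt 3) := by
    simp only [one_mul]; exact gauss_mgf
  have h0 : ∫⁻ x, ENNReal.ofReal (Real.exp (((0:ℝ) * x)^2/3)) ∂(gaussianReal 0 1) = 1 := by
    simp
  rw [h1, h0, smul_eq_mul, smul_eq_mul, mul_one, ← ENNReal.ofReal_mul hθ0]
  rw [← ENNReal.ofReal_add (by positivity) (by linarith)]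
  congr 1
  ring

lemma iIndepFun_congr_ae {Ω ι : Type*} [MeasurableSpace Ω] {μ : Measure Ω} [Countable ι]
    {β : ι → Type*} [m : ∀ i, MeasurableSpace (β i)] {f f' : ∀ i, Ω → β i}
    (h : iIndepFun f μ) (h' : ∀ i, f i =ᵐ[μ] f' i) : iIndepFun f' μ := by
  rw [iIndepFun_iff_measure_inter_preimage_eq_mul] at h ⊢
  intro S sets hsets
  have hae : ∀ᵐ ω ∂μ, ∀ i, f i ω = f' i ω := ae_all_iff.2 h'
  have h1 : μ (⋂ i ∈ S, f' i ⁻¹' sets i) = μ (⋂ i ∈ S, f i ⁻¹' sets i) := by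
    apply measure_congr
    filter_upwards [hae] with ω hω
    show (ω ∈ ⋂ i ∈ S, f' i ⁻¹' sets i) = (ω ∈ ⋂ i ∈ S, f i ⁻¹' sets i)
    simp only [Set.mem_iInter, Set.mem_preimage, hω]
  have h2 : ∀ i ∈ S, μ (f' i ⁻¹' sets i) = μ (f i ⁻¹' sets i) := by
    intro i _
    apply measure_congr
    filter_upwards [h' i] with ω hω
    show (ω ∈ f' i ⁻¹' sets i) = (ω ∈ f i ⁻¹' sets i)
    simp only [Set.mem_preimage, hω]
  rw [h1, h S hsets]
  exact (Finset.prod_congr rfl h2).symm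

lemma lintegral_finset_prod_of_iIndepFun {Ω ι : Type*} [MeasurableSpace Ω] {μ : Measure Ω}
    [IsProbabilityMeasure μ] {f : ι → Ω → ℝ≥0∞}
    (h : iIndepFun f μ) (hm : ∀ i, Measurable (f i)) (S : Finset ι) :
    ∫⁻ ω, ∏ i ∈ S, f i ω ∂μ = ∏ i ∈ S, ∫⁻ ω, f i ω ∂μ := by
  classical
  induction S using Finset.induction_on with
  | empty => simp
  | @insert a S ha ih =>
    rw [Finset.prod_insert ha]
    have hindep : IndepFun (f a) (∏ j ∈ S, f j) μ :=
      (h.indepFun_finset_prod_of_notMem hm ha).symm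
    have hmp : Measurable fun ω => ∏ j ∈ S, f j ω := by
      apply Finset.measurable_prod
      exact fun i _ => hm i
    have := lintegral_mul_eq_lintegral_mul_lintegral_of_indepFun'' (μ := μ)
      (hm a).aemeasurable hmp.aemeasurable ?_
    · rw [show (fun ω => ∏ i ∈ insert a S, f i ω) = fun ω => f a ω * ∏ j ∈ S, f j ω by
        funext ω; exact Finset.prod_insert ha, this, ih]
    · have h2 := hindep
      convert h2 using 1
      funext ω
      simp

theorem bernoulli_gaussian_row_norm_bound {Ω : Type*} [MeasurableSpace Ω]
    (μ : Measure Ω) [IsProbabilityMeasure μ] (r s : ℕ) (hr : 0 < r) (hs : 0 < s)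
    (θ : ℝ) (hθ0 : 0 ≤ θ) (hθ1 : θ ≤ 1)
    (B ξ : Fin r → Fin s → Ω → ℝ)
    (hindep : iIndepFun
      (fun (p : Fin r × Fin s) ω => (B p.1 p.2 ω, ξ p.1 p.2 ω)) μ)
    (hpair : ∀ i j, IndepFun (B i j) (ξ i j) μ)
    (hber : ∀ i j, Measure.map (B i j) μ =
      ENNReal.ofReal θ • Measure.dirac (1 : ℝ) + ENNReal.ofReal (1 - θ) • Measure.dirac 0)
    (hgauss : ∀ i j, Measure.map (ξ i j) μ = gaussianReal 0 1) :
    μ {ω | 5 * s * θ < ⨆ i : Fin r, ∑ j, (B i j ω * ξ i j ω) ^ 2}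
      ≤ ENNReal.ofReal (r * exp (-(s * θ) / 6)) := by
  classical
  haveI : Nonempty (Fin r) := Fin.pos_iff_nonempty.1 hr
  -- a.e. measurability of B and ξ
  have hBae : ∀ i j, AEMeasurable (B i j) μ := by
    intro i j
    by_contra hc
    have h1 := hber i j
    rw [Measure.map_of_not_aemeasurable hc] at h1
    have h2 := congrArg (fun m : Measure ℝ => m Set.univ) h1
    simp only [Measure.coe_zero, Pi.zero_apply, Measure.coe_add, Measure.coe_smul,
      Pi.add_apply, Pi.smul_apply, measure_univ, smul_eq_mul, mul_one] at h2
    rw [← ENNReal.ofReal_add hθ0 (by linarith)] at h2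
    simp at h2
  have hξae : ∀ i j, AEMeasurable (ξ i j) μ := by
    intro i j
    by_contra hc
    have h1 := hgauss i j
    rw [Measure.map_of_not_aemeasurable hc] at h1
    have h2 := congrArg (fun m : Measure ℝ => m Set.univ) h1
    simp at h2
  -- measurable modifications
  set B' : Fin r → Fin s → Ω → ℝ := fun i j => (hBae i j).mk _ with hB'def
  set ξ' : Fin r → Fin s → Ω → ℝ := fun i j => (hξae i j).mk _ with hξ'def
  have hB'm : ∀ i j, Measurable (B' i j) := fun i j => (hBae i j).measurable_mk
  have hξ'm : ∀ i j, Measurable (ξ' i j) := fun i j => (hξae i j).measurable_mk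
  have hB'ae : ∀ i j, B i j =ᵐ[μ] B' i j := fun i j => (hBae i j).ae_eq_mk
  have hξ'ae : ∀ i j, ξ i j =ᵐ[μ] ξ' i j := fun i j => (hξae i j).ae_eq_mk
  set P' : Fin r × Fin s → Ω → ℝ × ℝ := fun p ω => (B' p.1 p.2 ω, ξ' p.1 p.2 ω) with hP'def
  have hP'm : ∀ p, Measurable (P' p) := fun p => (hB'm p.1 p.2).prodMk (hξ'm p.1 p.2)
  have hindep' : iIndepFun P' μ := by
    refine iIndepFun_congr_ae hindep fun p => ?_
    filter_upwards [hB'ae p.1 p.2, hξ'ae p.1 p.2] with ω h1 h2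
    simp [hP'def, h1, h2]
  -- the entrywise exponential random variables
  set g : ℝ × ℝ → ℝ≥0∞ := fun q => ENNReal.ofReal (Real.exp ((q.1 * q.2) ^ 2 / 3)) with hgdef
  have hg : Measurable g := by fun_prop
  set X : Fin r × Fin s → Ω → ℝ≥0∞ := fun p => g ∘ P' p with hXdef
  have hXm : ∀ p, Measurable (X p) := fun p => hg.comp (hP'm p)
  have hindepX : iIndepFun X μ :=
    hindep'.comp (fun _ => g) (fun _ => hg)
  -- per-entry expectation
  have hentry : ∀ p : Fin r × Fin s, ∫⁻ ω, X p ω ∂μ =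
      ENNReal.ofReal (1 - θ + Real.sqrt 3 * θ) := by
    intro p
    have hXeq : X p =ᵐ[μ] fun ω => g (B p.1 p.2 ω, ξ p.1 p.2 ω) := by
      filter_upwards [hB'ae p.1 p.2, hξ'ae p.1 p.2] with ω h1 h2
      simp [hXdef, hP'def, h1, h2]
    rw [lintegral_congr_ae hXeq,
      ← lintegral_map' hg.aemeasurable ((hBae p.1 p.2).prodMk (hξae p.1 p.2)),
      (indepFun_iff_map_prod_eq_prod_map_map (hBae p.1 p.2) (hξae p.1 p.2)).1
        (hpair p.1 p.2),
      hber p.1 p.2, hgauss p.1 p.2]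
    exact entry_mgf θ hθ0 hθ1
  -- constants
  have hsqrt3 : Real.sqrt 3 ≤ 5/2 := by
    nlinarith [Real.sq_sqrt (by norm_num : (0:ℝ) ≤ 3), Real.sqrt_nonneg 3]
  set c : ℝ := 1 - θ + Real.sqrt 3 * θ with hcdef
  have hc0 : 0 ≤ c := by nlinarith [Real.sqrt_nonneg 3]
  -- the row sums with measurable modifications
  set Y : Fin r → Ω → ℝ := fun i ω => ∑ j, (B' i j ω * ξ' i j ω) ^ 2 with hYdef
  -- replace the event by its measurable modification
  have hEset : μ {ω | 5 * s * θ < ⨆ i : Fin r, ∑ j, (B i j ω * ξ i j ω) ^ 2}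
      = μ {ω | 5 * s * θ < ⨆ i : Fin r, Y i ω} := by
    apply measure_congr
    have hae : ∀ᵐ ω ∂μ, ∀ i j, B i j ω = B' i j ω ∧ ξ i j ω = ξ' i j ω := by
      rw [ae_all_iff]
      intro i
      rw [ae_all_iff]
      intro j
      filter_upwards [hB'ae i j, hξ'ae i j] with ω h1 h2 using ⟨h1, h2⟩
    filter_upwards [hae] with ω hω
    show (5 * s * θ < ⨆ i : Fin r, ∑ j, (B i j ω * ξ i j ω) ^ 2)
        = (5 * s * θ < ⨆ i : Fin r, Y i ω)
    have heq : (fun i : Fin r => ∑ j, (B i j ω * ξ i j ω) ^ 2) = fun i => Y i ω := by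
      funext i
      exact Finset.sum_congr rfl fun j _ => by rw [(hω i j).1, (hω i j).2]
    rw [heq]
  rw [hEset]
  -- union bound
  have hsub : {ω | 5 * s * θ < ⨆ i : Fin r, Y i ω} ⊆
      ⋃ i : Fin r, {ω | 5 * s * θ < Y i ω} := by
    intro ω hω
    have hω' : 5 * s * θ < ⨆ i : Fin r, Y i ω := hω
    obtain ⟨i, hi⟩ := exists_lt_of_lt_ciSup hω'
    exact Set.mem_iUnion.2 ⟨i, hi⟩
  refine le_trans (measure_mono hsub) (le_trans (measure_iUnion_le _) ?_)
  -- per-row bound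
  have hrow : ∀ i : Fin r, μ {ω | 5 * s * θ < Y i ω} ≤
      ENNReal.ofReal (Real.exp (-(s * θ) / 6)) := by
    intro i
    set f : Ω → ℝ≥0∞ := fun ω => ENNReal.ofReal (Real.exp (Y i ω / 3)) with hfdef
    have hfm : Measurable f := by
      apply Measurable.ennreal_ofReal
      apply Real.measurable_exp.comp
      apply Measurable.div_const
      apply Finset.measurable_sum
      exact fun j _ => ((hB'm i j).mul (hξ'm i j)).pow_const 2
    set ε : ℝ≥0∞ := ENNReal.ofReal (Real.exp (5 * s * θ / 3)) with hεdef
    have hεpos : 0 < Real.exp (5 * s * θ / 3) := Real.exp_pos _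
    have hsub2 : {ω | 5 * s * θ < Y i ω} ⊆ {ω | ε ≤ f ω} := by
      intro ω hω
      exact ENNReal.ofReal_le_ofReal (Real.exp_le_exp.2 (by
        have : (5:ℝ) * s * θ < Y i ω := hω
        linarith))
    have hmarkov := mul_meas_ge_le_lintegral₀ (μ := μ) hfm.aemeasurable ε
    -- compute the lintegral of f as a product
    have hprod : ∫⁻ ω, f ω ∂μ = ENNReal.ofReal c ^ s := by
      have hfact : ∀ ω, f ω = ∏ p ∈ ({i} ×ˢ (Finset.univ : Finset (Fin s))), X p ω := by
        intro ω
        rw [Finset.prod_product, Finset.prod_singleton]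
        rw [hfdef]
        simp only [hXdef, hgdef, hP'def, Function.comp_apply]
        rw [← ENNReal.ofReal_prod_of_nonneg (fun j _ => (Real.exp_pos _).le)]
        congr 1
        rw [← Real.exp_sum]
        congr 1
        rw [hYdef]
        rw [Finset.sum_div]
      simp only [hfact]
      rw [lintegral_finset_prod_of_iIndepFun hindepX hXm]
      rw [Finset.prod_congr rfl fun p _ => hentry p, Finset.prod_const]
      congr 1
      simp
    -- put it together
    have hεne : ε ≠ 0 := by simp [hεdef, hεpos]
    have hεtop : ε ≠ ⊤ := ENNReal.ofReal_ne_top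
    have hle : μ {ω | 5 * s * θ < Y i ω} ≤ ε⁻¹ * ENNReal.ofReal c ^ s := by
      have h1 : μ {ω | 5 * s * θ < Y i ω} ≤ μ {ω | ε ≤ f ω} := measure_mono hsub2
      have h2 : ε * μ {ω | ε ≤ f ω} ≤ ENNReal.ofReal c ^ s := hprod ▸ hmarkov
      calc μ {ω | 5 * s * θ < Y i ω} ≤ μ {ω | ε ≤ f ω} := h1
        _ = ε⁻¹ * (ε * μ {ω | ε ≤ f ω}) := by
            rw [← mul_assoc, ENNReal.inv_mul_cancel hεne hεtop, one_mul]
        _ ≤ ε⁻¹ * ENNReal.ofReal c ^ s := by gcongr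
    refine le_trans hle ?_
    have hεinv : ε⁻¹ = ENNReal.ofReal (Real.exp (-(5 * s * θ / 3))) := by
      rw [hεdef, ← ENNReal.ofReal_inv_of_pos hεpos, ← Real.exp_neg]
    rw [hεinv, ← ENNReal.ofReal_pow hc0, ← ENNReal.ofReal_mul (Real.exp_pos _).le]
    apply ENNReal.ofReal_le_ofReal
    -- numeric inequality
    have hsθ : (0:ℝ) ≤ s * θ := by positivity
    have hcle : c ≤ Real.exp ((Real.sqrt 3 - 1) * θ) := by
      have := Real.add_one_le_exp ((Real.sqrt 3 - 1) * θ)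
      nlinarith
    have hpow : c ^ s ≤ Real.exp ((Real.sqrt 3 - 1) * θ * s) := by
      calc c ^ s ≤ Real.exp ((Real.sqrt 3 - 1) * θ) ^ s := pow_le_pow_left₀ hc0 hcle s
        _ = Real.exp ((Real.sqrt 3 - 1) * θ * s) := by
            rw [← Real.exp_nat_mul]; ring_nf
    calc Real.exp (-(5 * s * θ / 3)) * c ^ s
        ≤ Real.exp (-(5 * s * θ / 3)) * Real.exp ((Real.sqrt 3 - 1) * θ * s) := by
          apply mul_le_mul_of_nonneg_left hpow (Real.exp_pos _).le
      _ = Real.exp (-(5 * s * θ / 3) + (Real.sqrt 3 - 1) * θ * s) := (Real.exp_add _ _).symm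
      _ ≤ Real.exp (-(s * θ) / 6) := by
          apply Real.exp_le_exp.2
          nlinarith
  -- sum up
  calc ∑' i : Fin r, μ {ω | 5 * s * θ < Y i ω}
      ≤ ∑' _i : Fin r, ENNReal.ofReal (Real.exp (-(s * θ) / 6)) :=
        ENNReal.tsum_le_tsum hrow
    _ = (r : ℝ≥0∞) * ENNReal.ofReal (Real.exp (-(s * θ) / 6)) := by
        rw [tsum_fintype]; simp [Finset.card_univ]
    _ = ENNReal.ofReal (r * Real.exp (-(s * θ) / 6)) := by
        rw [← ENNReal.ofReal_natCast r, ← ENNReal.ofReal_mul (by positivity)]
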